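/- There is an absolute constant C > 0 such that the following holds. Let k ≥ 2 be an integer, let 0 < λ ≤ 1, let x be sufficiently large in terms of k and λ, let g be a squarefree positive integer with log x ≤ g ≤ 2 log x, and let h₁ < ... < h_k be integers with 0 < h₁ and h_k < λ log x. Let d be a positive integer with d ≤ √(λ log x) and gcd(d, g) = 1. Then for every residue class c modulo d, the number of positive integers h ≤ 5λ log x with h ∉ {h₁, ..., h_k}, gcd(h, g) = 1 and h ≡ c (mod d) is at most C · (φ(g)/g) · (λ log x)/d. -/

import Mathlib

open Finset

set_option maxHeartbeats 2000000

private lemma prod_one_sub_ge {s : Finset ℕ} {f : ℕ → ℝ} (h0 : ∀ i ∈ s, 0 ≤ f i)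
    (h1 : ∀ i ∈ s, f i ≤ 1) :
    1 - ∑ i ∈ s, f i ≤ ∏ i ∈ s, (1 - f i) := by
  induction s using Finset.cons_induction with
  | empty => simp
  | cons i s hi ih =>
    rw [Finset.prod_cons, Finset.sum_cons]
    have hi0 := h0 i (Finset.mem_cons_self i s)
    have hi1 := h1 i (Finset.mem_cons_self i s)
    have ihs := ih (fun j hj => h0 j (Finset.mem_cons_of_mem hj))
      (fun j hj => h1 j (Finset.mem_cons_of_mem hj))
    have hsum : 0 ≤ ∑ j ∈ s, f j :=
      Finset.sum_nonneg (fun j hj => h0 j (Finset.mem_cons_of_mem hj))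
    nlinarith [mul_le_mul_of_nonneg_left ihs (by linarith : (0:ℝ) ≤ 1 - f i)]

private lemma step1 {H d c g a : ℕ} (hag : a ∣ g) (P : ℕ → Prop) [DecidablePred P] :
    ((Finset.Icc 1 H).filter (fun h => P h ∧ Nat.Coprime h g ∧ h % d = c % d)).card ≤
      ((Finset.range (H / d + 1)).filter (fun m => Nat.Coprime (c % d + d * m) a)).card := by
  apply Finset.card_le_card_of_injOn (fun h => h / d)
  · intro h hh
    simp only [Finset.coe_filter, Set.mem_setOf_eq, Finset.mem_coe, Finset.mem_filter, Finset.mem_Icc, Finset.mem_range] at hh ⊢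
    obtain ⟨⟨h1, h2⟩, _, hcg, hmod⟩ := hh
    refine ⟨Nat.lt_succ_of_le (Nat.div_le_div_right h2), ?_⟩
    have he : c % d + d * (h / d) = h := by rw [← hmod, Nat.mod_add_div]
    rw [he]
    exact hcg.coprime_dvd_right hag
  · intro h hh h' hh' heq
    simp only [Finset.coe_filter, Set.mem_setOf_eq, Finset.mem_Icc] at hh hh'
    obtain ⟨_, _, _, hmod⟩ := hh
    obtain ⟨_, _, _, hmod'⟩ := hh'
    have heq' : h / d = h' / d := heq
    rw [← Nat.mod_add_div h d, ← Nat.mod_add_div h' d, hmod, hmod', heq']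

private lemma step2 {a d : ℕ} (ha : 0 < a) (hda : Nat.Coprime d a) (c M : ℕ) :
    ((Finset.range M).filter (fun m => Nat.Coprime (c + d * m) a)).card ≤
      (M / a + 1) * a.totient := by
  have hcard : (M / a + 1) * a.totient =
      ((Finset.range (M / a + 1)) ×ˢ ((Finset.range a).filter a.Coprime)).card := by
    rw [Finset.card_product, Finset.card_range, Nat.totient_eq_card_coprime]
  rw [hcard]
  apply Finset.card_le_card_of_injOn (fun m => (m / a, (c + d * m) % a))
  · intro m hm
    simp only [Finset.coe_filter, Set.mem_setOf_eq, Finset.mem_coe, Finset.coe_product, Set.mem_prod, Finset.mem_filter, Finset.mem_range, Finset.mem_product] at hm ⊢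
    obtain ⟨hmM, hcop⟩ := hm
    refine ⟨Nat.lt_succ_of_le (Nat.div_le_div_right hmM.le), Nat.mod_lt _ ha, ?_⟩
    unfold Nat.Coprime
    rw [Nat.gcd_comm, ← Nat.gcd_rec]
    exact hcop.symm
  · intro m hm m' hm' heq
    simp only [Finset.coe_filter, Set.mem_setOf_eq, Finset.mem_range, Prod.mk.injEq] at hm hm' heq
    obtain ⟨hq0, hr0⟩ := heq
    have hq : m / a = m' / a := hq0
    have hr : (c + d * m) % a = (c + d * m') % a := hr0
    have hmeq : (c + d * m) ≡ (c + d * m') [MOD a] := hr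
    have h2 : d * m ≡ d * m' [MOD a] := hmeq.add_left_cancel' c
    have h3 : m ≡ m' [MOD a] := Nat.ModEq.cancel_left_of_coprime (Nat.coprime_comm.mp hda) h2
    have h4 : m % a = m' % a := h3
    rw [← Nat.div_add_mod m a, ← Nat.div_add_mod m' a, hq, h4]

theorem stmt4 :
    ∃ C : ℝ, 0 < C ∧
    ∀ k : ℕ, 2 ≤ k →
    ∀ lam : ℝ, 0 < lam → lam ≤ 1 → ∃ x₀ : ℝ,
    ∀ x : ℝ, x₀ ≤ x →
    ∀ g : ℕ, 0 < g → Squarefree g → Real.log x ≤ (g : ℝ) → (g : ℝ) ≤ 2 * Real.log x →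
    ∀ hs : Fin k → ℤ, StrictMono hs → (∀ i, 0 < hs i) →
      (∀ i, (hs i : ℝ) < lam * Real.log x) →
    ∀ d : ℕ, 0 < d → (d : ℝ) ≤ Real.sqrt (lam * Real.log x) → Nat.Coprime d g →
    ∀ c : ℕ,
      (((Finset.Icc 1 ⌊5 * lam * Real.log x⌋₊).filter
          (fun h : ℕ => (∀ i, (h : ℤ) ≠ hs i) ∧ Nat.Coprime h g ∧ h % d = c % d)).card : ℝ)
        ≤ C * ((Nat.totient g : ℝ) / g) * (lam * Real.log x) / d := by
  refine ⟨11, by norm_num, ?_⟩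
  intro k hk lam hlam hlam1
  refine ⟨Real.exp (Real.exp (max (Real.exp 100) (100 - 12 * Real.log lam))), ?_⟩
  intro x hx g hgpos hgsf hgl hgu hs hmono hspos hsub d hdpos hdle hdg c
  set E := max (Real.exp 100) (100 - 12 * Real.log lam) with hE
  set X := Real.log x with hX
  set L := Real.log X with hLdef
  set u := Real.log L with hudef
  have hEpos : 0 < E := lt_of_lt_of_le (Real.exp_pos 100) (le_max_left _ _)
  have hXge : Real.exp E ≤ X := by
    have h := Real.log_le_log (Real.exp_pos _) hx
    rwa [Real.log_exp] at h
  have hXpos : 0 < X := lt_of_lt_of_le (Real.exp_pos E) hXge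
  have hLge : E ≤ L := by
    have h := Real.log_le_log (Real.exp_pos E) hXge
    rwa [Real.log_exp] at h
  have hL100 : Real.exp 100 ≤ L := le_trans (le_max_left _ _) hLge
  have hLlam : 100 - 12 * Real.log lam ≤ L := le_trans (le_max_right _ _) hLge
  have hLbig : (100:ℝ) ≤ L := by
    have h := Real.add_one_le_exp (100:ℝ)
    linarith only [h, hL100]
  have hLpos : 0 < L := by linarith only [hLbig]
  have hu100 : (100:ℝ) ≤ u := by
    have h := Real.log_le_log (Real.exp_pos 100) hL100
    rwa [Real.log_exp] at h
  have hupos : 0 < u := by linarith only [hu100]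
  have hXL : X = Real.exp L := (Real.exp_log hXpos).symm
  have hloglam : Real.log lam ≤ 0 := Real.log_nonpos hlam.le hlam1
  -- log u ≤ u / 2
  have hlogu : Real.log u ≤ u / 2 := by
    have hs10 : (10:ℝ) ≤ Real.sqrt u := by
      have h := Real.sqrt_le_sqrt hu100
      rwa [show (100:ℝ) = 10 ^ 2 by norm_num, Real.sqrt_sq (by norm_num : (0:ℝ) ≤ 10)] at h
    have h1 : Real.log u = 2 * Real.log (Real.sqrt u) := by
      rw [Real.log_sqrt hupos.le]; ring
    have h2 : Real.log (Real.sqrt u) ≤ Real.sqrt u - 1 :=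
      Real.log_le_sub_one_of_pos (by positivity)
    have h3 : Real.sqrt u ^ 2 = u := Real.sq_sqrt hupos.le
    nlinarith only [h1, h2, h3, hs10]
  -- T
  set T := ⌈6 * L / u⌉₊ with hT
  have hTge : 6 * L / u ≤ (T : ℝ) := Nat.le_ceil _
  have hTle : (T : ℝ) ≤ 6 * L / u + 1 := (Nat.ceil_lt_add_one (by positivity)).le
  have h6Lu_pos : 0 < 6 * L / u := by positivity
  -- the prime factor split
  set Sa := g.primeFactors.filter (fun p => p ≤ T) with hSa
  set Sb := g.primeFactors.filter (fun p => ¬ p ≤ T) with hSb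
  set a := ∏ p ∈ Sa, p with ha
  set b := ∏ p ∈ Sb, p with hb
  have hprimeA : ∀ p ∈ Sa, p.Prime := fun p hp =>
    Nat.prime_of_mem_primeFactors (Finset.mem_filter.mp hp).1
  have hprimeB : ∀ p ∈ Sb, p.Prime := fun p hp =>
    Nat.prime_of_mem_primeFactors (Finset.mem_filter.mp hp).1
  have hab : a * b = g := by
    rw [ha, hb, hSa, hSb, Finset.prod_filter_mul_prod_filter_not,
      Nat.prod_primeFactors_of_squarefree hgsf]
  have ha1 : 1 ≤ a := Finset.one_le_prod' (fun p hp => (hprimeA p hp).one_lt.le)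
  have hb1 : 1 ≤ b := Finset.one_le_prod' (fun p hp => (hprimeB p hp).one_lt.le)
  have hadvd : a ∣ g := ⟨b, hab.symm⟩
  have hbdvd : b ∣ g := ⟨a, by rw [mul_comm, hab]⟩
  have hcopab : Nat.Coprime a b := by
    rw [ha, hb]
    refine Nat.coprime_prod_left_iff.mpr (fun p hp => ?_)
    refine Nat.coprime_prod_right_iff.mpr (fun q hq => ?_)
    refine (Nat.coprime_primes (hprimeA p hp) (hprimeB q hq)).mpr ?_
    have h1 := (Finset.mem_filter.mp hp).2
    have h2 := (Finset.mem_filter.mp hq).2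
    intro h; exact h2 (h ▸ h1)
  have htotmul : g.totient = a.totient * b.totient := by
    rw [← hab, Nat.totient_mul hcopab]
  have hbPF : b.primeFactors = Sb := Nat.primeFactors_prod hprimeB
  -- real totient ratio for b
  have hbR : (b.totient : ℝ) = (b : ℝ) * ∏ p ∈ Sb, (1 - (p : ℝ)⁻¹) := by
    have hbQ := Nat.totient_eq_mul_prod_factors b
    rw [hbPF] at hbQ
    have h := congrArg (fun q : ℚ => (q : ℝ)) hbQ
    push_cast at h
    exact_mod_cast h
  -- ω bound
  set ω := Sb.card with hω
  clear_value E X L u T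
  have hTpow : ((T : ℝ) + 1) ^ ω ≤ (b : ℝ) := by
    have h1 : ∏ p ∈ Sb, ((T : ℝ) + 1) ≤ ∏ p ∈ Sb, (p : ℝ) := by
      refine Finset.prod_le_prod (fun p _ => by positivity) (fun p hp => ?_)
      have h2 := (Finset.mem_filter.mp hp).2
      have : T + 1 ≤ p := by omega
      exact_mod_cast this
    rwa [Finset.prod_const, ← Nat.cast_prod, ← hb] at h1
  have hbg : (b : ℝ) ≤ 2 * X := by
    have h := Nat.le_of_dvd hgpos hbdvd
    calc (b : ℝ) ≤ (g : ℝ) := by exact_mod_cast h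
      _ ≤ 2 * X := hgu
  have hlogT : u / 2 ≤ Real.log ((T : ℝ) + 1) := by
    have h1 : Real.log (6 * L / u) ≤ Real.log ((T : ℝ) + 1) :=
      Real.log_le_log h6Lu_pos (by linarith)
    have h2 : Real.log (6 * L / u) = Real.log 6 + Real.log L - Real.log u := by
      rw [Real.log_div (by positivity) (by positivity), Real.log_mul (by norm_num) (by positivity)]
    have h3 : (0:ℝ) ≤ Real.log 6 := Real.log_nonneg (by norm_num)
    rw [← hudef] at h2
    linarith only [h1, h2, h3, hlogu]
  have hωu : (ω : ℝ) * u ≤ 3 * L := by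
    have h1 : Real.log (((T : ℝ) + 1) ^ ω) ≤ Real.log (2 * X) :=
      Real.log_le_log (by positivity) (le_trans hTpow hbg)
    rw [Real.log_pow, Real.log_mul (by norm_num) (by positivity), hXL, Real.log_exp] at h1
    have hlog2 : Real.log 2 ≤ 1 := by
      have := Real.log_le_sub_one_of_pos (by norm_num : (0:ℝ) < 2); linarith
    have h4 : (ω : ℝ) * (u / 2) ≤ (ω : ℝ) * Real.log ((T : ℝ) + 1) :=
      mul_le_mul_of_nonneg_left hlogT (Nat.cast_nonneg _)
    nlinarith only [h1, h4, hlog2, hLbig]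
  have hωT : (ω : ℝ) ≤ ((T : ℝ) + 1) / 2 := by
    have h1 : (ω : ℝ) ≤ 3 * L / u := by
      rw [le_div_iff₀ hupos]; linarith only [hωu]
    have h2 : 3 * L / u = (6 * L / u) / 2 := by ring
    linarith only [h1, h2, hTge]
  -- φ(b)/b ≥ 1/2
  have hrb : (1 : ℝ) / 2 ≤ (b.totient : ℝ) / b := by
    have hbne : (b : ℝ) ≠ 0 := by positivity
    have hval : (b.totient : ℝ) / b = ∏ p ∈ Sb, (1 - (p : ℝ)⁻¹) := by
      rw [hbR]; field_simp
    have hlow : 1 - ∑ p ∈ Sb, (p : ℝ)⁻¹ ≤ ∏ p ∈ Sb, (1 - (p : ℝ)⁻¹) :=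
      prod_one_sub_ge (fun p _ => by positivity)
        (fun p hp => by
          have := (hprimeB p hp).two_le
          have hp1 : (1:ℝ) ≤ (p:ℝ) := by exact_mod_cast Nat.one_le_of_lt this
          exact inv_le_one_of_one_le₀ hp1)
    have hsum : ∑ p ∈ Sb, (p : ℝ)⁻¹ ≤ (ω : ℝ) * ((T : ℝ) + 1)⁻¹ := by
      have h := Finset.sum_le_card_nsmul Sb (fun p => (p : ℝ)⁻¹) (((T : ℝ) + 1)⁻¹)
        (fun p hp => by
          have h2 := (Finset.mem_filter.mp hp).2
          have h3 : T + 1 ≤ p := by omega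
          have h4 : ((T : ℝ) + 1) ≤ (p : ℝ) := by exact_mod_cast h3
          exact inv_anti₀ (by positivity) h4)
      rwa [nsmul_eq_mul] at h
    have hT1pos : (0:ℝ) < (T : ℝ) + 1 := by positivity
    have hfrac : (ω : ℝ) * ((T : ℝ) + 1)⁻¹ ≤ 1 / 2 := by
      rw [← div_eq_mul_inv, div_le_div_iff₀ hT1pos (by norm_num)]
      linarith only [hωT]
    rw [hval]
    linarith only [hlow, hsum, hfrac]
  -- a ≤ 4 ^ T
  have ha4T : (a : ℝ) ≤ (4 : ℝ) ^ T := by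
    have hsub2 : Sa ⊆ (Finset.range (T + 1)).filter Nat.Prime := by
      intro p hp
      rw [Finset.mem_filter] at hp ⊢
      exact ⟨Finset.mem_range.mpr (Nat.lt_succ_of_le hp.2), Nat.prime_of_mem_primeFactors hp.1⟩
    have h1 : a ≤ primorial T := by
      rw [ha, primorial]
      exact Finset.prod_le_prod_of_subset_of_one_le' hsub2
        (fun i hi _ => ((Finset.mem_filter.mp hi).2).one_lt.le)
    have h2 : a ≤ 4 ^ T := le_trans h1 (primorial_le_4_pow T)
    exact_mod_cast h2
  -- 4 * (4^T)^2 ≤ sqrt (lam * X)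
  have hlamX : 0 < lam * X := by positivity
  have hsqrt_eq : Real.sqrt (lam * X) = Real.exp ((Real.log lam + L) / 2) := by
    rw [← Real.exp_log (Real.sqrt_pos.mpr hlamX), Real.log_sqrt hlamX.le,
      Real.log_mul (ne_of_gt hlam) (ne_of_gt hXpos), ← hLdef]
  have hbig : 4 * ((4 : ℝ) ^ T) * ((4 : ℝ) ^ T) ≤ Real.sqrt (lam * X) := by
    have h4T : (4 : ℝ) ^ T = Real.exp (T * Real.log 4) := by
      rw [← Real.log_pow]
      exact (Real.exp_log (by positivity)).symm
    have hlog4 : Real.log 4 ≤ 1.4 := by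
      have h2 : Real.log 4 = 2 * Real.log 2 := by
        rw [show (4:ℝ) = 2 ^ 2 by norm_num, Real.log_pow]; push_cast; ring
      have := Real.log_two_lt_d9
      linarith
    have hlog4' : (0:ℝ) ≤ Real.log 4 := Real.log_nonneg (by norm_num)
    have hTbound : (T : ℝ) ≤ 6 * L / 100 + 1 := by
      have : 6 * L / u ≤ 6 * L / 100 := by
        apply div_le_div_of_nonneg_left (by linarith) (by norm_num) hu100
      linarith
    have hTlog4 : (T : ℝ) * Real.log 4 ≤ (6 * L / 100 + 1) * 1.4 :=
      mul_le_mul hTbound hlog4 hlog4' (by positivity)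
    have hexp : 4 * ((4 : ℝ) ^ T) * ((4 : ℝ) ^ T) =
        Real.exp (Real.log 4 + T * Real.log 4 + T * Real.log 4) := by
      rw [Real.exp_add, Real.exp_add, h4T, Real.exp_log (by norm_num : (0:ℝ) < 4)]
    rw [hexp, hsqrt_eq]
    apply Real.exp_le_exp.mpr
    linarith only [hlog4, hlog4', hTlog4, hLlam, hLbig, hloglam]
  -- counting
  set H := ⌊5 * lam * X⌋₊ with hH
  set M := H / d + 1 with hM
  have hHle : (H : ℝ) ≤ 5 * lam * X := by
    rw [hH]; exact Nat.floor_le (by positivity)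

  have hdg' : Nat.Coprime d a := hdg.coprime_dvd_right hadvd
  have hapos : 0 < a := ha1
  have hcount : ((Finset.Icc 1 H).filter
      (fun h : ℕ => (∀ i, (h : ℤ) ≠ hs i) ∧ Nat.Coprime h g ∧ h % d = c % d)).card ≤
      M / a * a.totient + a.totient := by
    calc ((Finset.Icc 1 H).filter
        (fun h : ℕ => (∀ i, (h : ℤ) ≠ hs i) ∧ Nat.Coprime h g ∧ h % d = c % d)).card
        ≤ ((Finset.range M).filter
            (fun m => Nat.Coprime (c % d + d * m) a)).card := step1 hadvd _
      _ ≤ (M / a + 1) * a.totient := step2 hapos hdg' _ _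
      _ = M / a * a.totient + a.totient := by ring
  -- real estimates
  have hdR : (1 : ℝ) ≤ (d : ℝ) := by exact_mod_cast hdpos
  have hdRpos : (0 : ℝ) < (d : ℝ) := by linarith only [hdR]
  have hsqle : Real.sqrt (lam * X) ≤ lam * X / d := by
    have h1 : lam * X / Real.sqrt (lam * X) = Real.sqrt (lam * X) := Real.div_sqrt
    rw [← h1]
    exact div_le_div_of_nonneg_left hlamX.le hdRpos hdle
  have haR : (1 : ℝ) ≤ (a : ℝ) := by exact_mod_cast ha1
  have haR' : (0 : ℝ) < (a : ℝ) := by linarith only [haR]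
  have hatot1 : (1 : ℝ) ≤ (a.totient : ℝ) := by
    have := Nat.totient_pos.mpr hapos
    exact_mod_cast this
  have hatota : (a.totient : ℝ) ≤ (a : ℝ) := by exact_mod_cast Nat.totient_le a
  have hgR : (0 : ℝ) < (g : ℝ) := by exact_mod_cast hgpos
  have hbRpos : (0 : ℝ) < (b : ℝ) := by exact_mod_cast hb1
  have hg_eq : (g.totient : ℝ) / g = ((a.totient : ℝ) / a) * ((b.totient : ℝ) / b) := by
    rw [htotmul, ← hab]
    push_cast
    rw [mul_div_mul_comm]
  have hra_le : (a.totient : ℝ) / a ≤ 2 * ((g.totient : ℝ) / g) := by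
    rw [hg_eq]
    have h0 : (0:ℝ) ≤ (a.totient : ℝ) / a := by positivity
    nlinarith only [h0, hrb]
  have hrg_lb : 1 / (2 * (a : ℝ)) ≤ (g.totient : ℝ) / g := by
    rw [hg_eq]
    have h1 : 1 / (a : ℝ) ≤ (a.totient : ℝ) / a := by gcongr
    calc 1 / (2 * (a:ℝ)) = (1 / (a:ℝ)) * (1/2) := by ring
      _ ≤ ((a.totient : ℝ)/a) * ((b.totient : ℝ)/b) :=
          mul_le_mul h1 hrb (by norm_num) (by positivity)
  have h2a : 2 * (a:ℝ) * (1 + a) ≤ Real.sqrt (lam * X) := by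
    nlinarith only [ha4T, haR, hbig]
  have herr : 1 + (a:ℝ) ≤ ((g.totient : ℝ)/g) * (lam * X) / d := by
    have h2apos : (0:ℝ) < 2 * (a:ℝ) := by linarith only [haR]
    calc 1 + (a:ℝ) = (2*(a:ℝ)*(1+a)) / (2*a) := by field_simp
      _ ≤ Real.sqrt (lam*X) / (2*a) := by gcongr
      _ ≤ (lam*X/d) / (2*a) := by gcongr
      _ = (lam*X/d) * (1/(2*a)) := by ring
      _ ≤ (lam*X/d) * ((g.totient:ℝ)/g) :=
          mul_le_mul_of_nonneg_left hrg_lb (by positivity)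
      _ = ((g.totient:ℝ)/g) * (lam*X) / d := by ring
  have hdiv1 : ((H / d : ℕ) : ℝ) ≤ 5 * lam * X / d := by
    calc ((H / d : ℕ) : ℝ) ≤ (H : ℝ) / d := Nat.cast_div_le
      _ ≤ 5 * lam * X / d := by gcongr
  have hdiv2 : ((M / a : ℕ) : ℝ) ≤ (M : ℝ) / a := Nat.cast_div_le
  have hcardR : (((Finset.Icc 1 H).filter
      (fun h : ℕ => (∀ i, (h : ℤ) ≠ hs i) ∧ Nat.Coprime h g ∧ h % d = c % d)).card : ℝ) ≤
      ((M / a : ℕ) : ℝ) * (a.totient : ℝ) + (a.totient : ℝ) := by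
    exact_mod_cast hcount
  have hA : (((Finset.Icc 1 H).filter
      (fun h : ℕ => (∀ i, (h : ℤ) ≠ hs i) ∧ Nat.Coprime h g ∧ h % d = c % d)).card : ℝ) ≤
      (M : ℝ) * ((a.totient : ℝ)/a) + (a : ℝ) := by
    have h2 : ((M/a:ℕ):ℝ) * (a.totient:ℝ) ≤ (M:ℝ)/a * (a.totient:ℝ) :=
      mul_le_mul_of_nonneg_right hdiv2 (by positivity)
    have h3 : (M:ℝ)/a * (a.totient:ℝ) = (M:ℝ)*((a.totient:ℝ)/a) := by ring
    linarith only [hcardR, h2, h3, hatota]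
  have hB : (M:ℝ) * ((a.totient:ℝ)/a) ≤ 5*lam*X/d*((a.totient:ℝ)/a) + 1 := by
    have hratio0 : (0:ℝ) ≤ (a.totient:ℝ)/a := by positivity
    have hratio1 : (a.totient:ℝ)/a ≤ 1 := by rw [div_le_one haR']; exact hatota
    have h3 : (M:ℝ) ≤ 5*lam*X/d + 1 := by rw [hM]; push_cast; linarith only [hdiv1]
    nlinarith only [hratio0, hratio1, h3]
  have hmain : 5 * lam * X / d * ((a.totient:ℝ)/a) ≤ 10 * ((g.totient:ℝ)/g) * (lam * X) / d := by
    have h0 : (0:ℝ) ≤ 5 * lam * X / d := by positivity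
    calc 5*lam*X/d * ((a.totient:ℝ)/a) ≤ 5*lam*X/d * (2*((g.totient:ℝ)/g)) :=
        mul_le_mul_of_nonneg_left hra_le h0
      _ = 10 * ((g.totient:ℝ)/g) * (lam * X) / d := by ring
  have e1 : 10 * ((g.totient:ℝ)/g) * (lam * X) / d =
      10 * (((g.totient:ℝ)/g) * (lam * X) / d) := by ring
  have e2 : 11 * ((g.totient:ℝ)/g) * (lam * X) / d =
      11 * (((g.totient:ℝ)/g) * (lam * X) / d) := by ring
  linarith only [hA, hB, hmain, herr, e1, e2]
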